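/- For every real ζ with 0 < ζ < 1/2 and every integer m ≥ 2, setting ℓ := ⌈2m/ζ⌉, there exist ε₀ > 0 and, for each ε ∈ (0, ε₀], an n₀ ∈ ℕ such that the following holds for all n ≥ n₀. Let G' be a bipartite graph with parts A and B satisfying |A| = ⌊n/2⌋ and |B| = n − ⌊n/2⌋, in which every vertex has degree at least n^{1−2ε}. Then there exists a set M ⊆ A with |M| = ⌊n^{6ε}⌋ such that (a) |N_{G'}(v) ∩ M| ≥ n^{3ε} for every v ∈ B, and (b) there is no set S ⊆ B with |S| = m satisfying both |⋂_{v∈S} N_{G'}(v)| ≤ n^{1−ζ} and |⋂_{v∈S} N_{G'}(v) ∩ M| ≥ ℓ. -/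

import Mathlib

open Finset

lemma aux_count1 {α : Type*} [DecidableEq α] (A D : Finset α) (hD : D ⊆ A) (k t : ℕ) :
    ((A.powersetCard k).filter fun M => (M ∩ D).card < t).card ≤
      ∑ j ∈ Finset.range t, D.card.choose j * (A.card - D.card).choose (k - j) := by
  classical
  have hsub : ((A.powersetCard k).filter fun M => (M ∩ D).card < t) ⊆
      (Finset.range t).biUnion
        (fun j => (A.powersetCard k).filter fun M => (M ∩ D).card = j) := by
    intro M hM
    simp only [mem_filter, mem_biUnion, mem_range] at hM ⊢
    exact ⟨(M ∩ D).card, hM.2, hM.1, rfl⟩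
  refine (Finset.card_le_card hsub).trans (Finset.card_biUnion_le.trans ?_)
  refine Finset.sum_le_sum fun j _ => ?_
  have hcard : ((D.powersetCard j) ×ˢ ((A \ D).powersetCard (k - j))).card
      = D.card.choose j * (A.card - D.card).choose (k - j) := by
    rw [Finset.card_product, Finset.card_powersetCard, Finset.card_powersetCard,
      Finset.card_sdiff_of_subset hD]
  rw [← hcard]
  apply Finset.card_le_card_of_injOn (fun M => (M ∩ D, M \ D))
  · intro M hM
    simp only [mem_coe, mem_filter, Finset.mem_powersetCard] at hM
    obtain ⟨⟨hMA, hMk⟩, hj⟩ := hM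
    simp only [mem_coe, Finset.mem_product, Finset.mem_powersetCard]
    refine ⟨⟨inter_subset_right, hj⟩, ?_, ?_⟩
    · exact sdiff_subset_sdiff hMA (le_refl D)
    · have := Finset.card_inter_add_card_sdiff M D
      omega
  · intro M hM M' hM' h
    simp only [Prod.mk.injEq] at h
    have hM1 : M = M ∩ D ∪ M \ D := by ext u; simp; tauto
    have hM2 : M' = M' ∩ D ∪ M' \ D := by ext u; simp; tauto
    rw [hM1, hM2, h.1, h.2]

lemma aux_count2 {α : Type*} [DecidableEq α] (A T : Finset α) (hT : T ⊆ A) (k : ℕ) :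
    ((A.powersetCard k).filter fun M => T ⊆ M).card ≤
      (A.card - T.card).choose (k - T.card) := by
  classical
  have hcard : ((A \ T).powersetCard (k - T.card)).card
      = (A.card - T.card).choose (k - T.card) := by
    rw [Finset.card_powersetCard, Finset.card_sdiff_of_subset hT]
  rw [← hcard]
  apply Finset.card_le_card_of_injOn (fun M => M \ T)
  · intro M hM
    simp only [mem_coe, mem_filter, Finset.mem_powersetCard] at hM
    obtain ⟨⟨hMA, hMk⟩, hTM⟩ := hM
    simp only [mem_coe, Finset.mem_powersetCard]
    exact ⟨sdiff_subset_sdiff hMA (le_refl T), by rw [Finset.card_sdiff_of_subset hTM, hMk]⟩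
  · intro M hM M' hM' h
    simp only [mem_coe, mem_filter] at hM hM'
    have h1 : M \ T ∪ T = M' \ T ∪ T := by simp only at h; rw [h]
    rwa [Finset.sdiff_union_of_subset hM.2, Finset.sdiff_union_of_subset hM'.2] at h1

lemma aux_term_le {a d k j : ℕ} (hd : d ≤ a) (hj : j ≤ k) :
    d.choose j * (a - d).choose (k - j) ≤ a.choose k := by
  have h := Nat.add_choose_eq d (a - d) k
  rw [Nat.add_sub_cancel' hd] at h
  rw [h]
  refine Finset.single_le_sum (f := fun ij : ℕ × ℕ => d.choose ij.1 * (a - d).choose ij.2)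
    (fun i _ => Nat.zero_le _) (a := (j, k - j)) ?_
  rw [Finset.HasAntidiagonal.mem_antidiagonal]
  omega

lemma aux_chain (a d k Q P : ℕ) :
    ∀ r j, j + r ≤ k →
      (∀ i, j ≤ i → i < j + r →
        Q ≤ (d - i) * (k - i) ∧ (i + 1) * ((a - d) - (k - i - 1)) ≤ P) →
      d.choose j * (a - d).choose (k - j) * Q ^ r ≤
        d.choose (j + r) * (a - d).choose (k - (j + r)) * P ^ r := by
  intro r
  induction r with
  | zero => simp
  | succ r ih =>
    intro j hjk hbound
    have hjltk : j < k := by omega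
    have hstep : d.choose j * (a - d).choose (k - j) * ((d - j) * (k - j)) =
        d.choose (j + 1) * (a - d).choose (k - (j + 1)) *
          ((j + 1) * ((a - d) - (k - j - 1))) := by
      have h1 : d.choose (j + 1) * (j + 1) = d.choose j * (d - j) :=
        Nat.choose_succ_right_eq d j
      have h2 : (a - d).choose ((k - j - 1) + 1) * ((k - j - 1) + 1) =
          (a - d).choose (k - j - 1) * ((a - d) - (k - j - 1)) :=
        Nat.choose_succ_right_eq (a - d) (k - j - 1)
      have hkj : (k - j - 1) + 1 = k - j := by omega
      have hkj2 : k - (j + 1) = k - j - 1 := by omega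
      rw [hkj] at h2
      calc d.choose j * (a - d).choose (k - j) * ((d - j) * (k - j))
          = (d.choose j * (d - j)) * ((a - d).choose (k - j) * (k - j)) := by ring
        _ = (d.choose (j + 1) * (j + 1)) *
              ((a - d).choose (k - j - 1) * ((a - d) - (k - j - 1))) := by rw [h1, h2]
        _ = d.choose (j + 1) * (a - d).choose (k - (j + 1)) *
              ((j + 1) * ((a - d) - (k - j - 1))) := by rw [hkj2]; ring
    have hb := hbound j (le_refl j) (by omega)
    have hstep2 : d.choose j * (a - d).choose (k - j) * Q ≤
        d.choose (j + 1) * (a - d).choose (k - (j + 1)) * P :=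
      calc d.choose j * (a - d).choose (k - j) * Q
          ≤ d.choose j * (a - d).choose (k - j) * ((d - j) * (k - j)) :=
            Nat.mul_le_mul_left _ hb.1
        _ = d.choose (j + 1) * (a - d).choose (k - (j + 1)) *
              ((j + 1) * ((a - d) - (k - j - 1))) := hstep
        _ ≤ d.choose (j + 1) * (a - d).choose (k - (j + 1)) * P :=
            Nat.mul_le_mul_left _ hb.2
    have ihj := ih (j + 1) (by omega)
      (fun i hi1 hi2 => hbound i (by omega) (by omega))
    calc d.choose j * (a - d).choose (k - j) * Q ^ (r + 1)
        = (d.choose j * (a - d).choose (k - j) * Q) * Q ^ r := by ring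
      _ ≤ (d.choose (j + 1) * (a - d).choose (k - (j + 1)) * P) * Q ^ r :=
          Nat.mul_le_mul_right _ hstep2
      _ = (d.choose (j + 1) * (a - d).choose (k - (j + 1)) * Q ^ r) * P := by ring
      _ ≤ (d.choose (j + 1 + r) * (a - d).choose (k - (j + 1 + r)) * P ^ r) * P :=
          Nat.mul_le_mul_right _ ihj
      _ = d.choose (j + (r + 1)) * (a - d).choose (k - (j + (r + 1))) * P ^ (r + 1) := by
          rw [show j + 1 + r = j + (r + 1) by omega]; ring

lemma aux_bad1 {α : Type*} [DecidableEq α] (A D : Finset α) (hD : D ⊆ A) (k t : ℕ)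
    (h4d : 4 * t ≤ D.card) (h4k : 4 * t ≤ k) (ht : 1 ≤ t) :
    ((A.powersetCard k).filter fun M => (M ∩ D).card < t).card *
        ((D.card - 2 * t) * (k - 2 * t)) ^ t ≤
      t * (2 * t * A.card) ^ t * A.card.choose k := by
  classical
  set a := A.card
  set d := D.card
  have hda : d ≤ a := Finset.card_le_card hD
  have h1 := aux_count1 A D hD k t
  have hchain : ∀ j < t,
      d.choose j * (a - d).choose (k - j) * ((d - 2 * t) * (k - 2 * t)) ^ t ≤
        a.choose k * (2 * t * a) ^ t := by
    intro j hj
    have hc := aux_chain a d k ((d - 2 * t) * (k - 2 * t)) (2 * t * a) t j (by omega)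
      (fun i hi1 hi2 => by
        constructor
        · exact Nat.mul_le_mul (by omega) (by omega)
        · have : (a - d) - (k - i - 1) ≤ a := by omega
          exact Nat.mul_le_mul (by omega) this)
    refine hc.trans ?_
    have := aux_term_le (a := a) (d := d) (k := k) (j := j + t) hda (by omega)
    exact Nat.mul_le_mul_right _ this
  calc ((A.powersetCard k).filter fun M => (M ∩ D).card < t).card *
        ((d - 2 * t) * (k - 2 * t)) ^ t
      ≤ (∑ j ∈ Finset.range t, d.choose j * (a - d).choose (k - j)) *
        ((d - 2 * t) * (k - 2 * t)) ^ t := Nat.mul_le_mul_right _ h1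
    _ = ∑ j ∈ Finset.range t,
        d.choose j * (a - d).choose (k - j) * ((d - 2 * t) * (k - 2 * t)) ^ t := by
        rw [Finset.sum_mul]
    _ ≤ ∑ j ∈ Finset.range t, a.choose k * (2 * t * a) ^ t :=
        Finset.sum_le_sum (fun j hj => hchain j (Finset.mem_range.mp hj))
    _ = t * (2 * t * a) ^ t * a.choose k := by
        rw [Finset.sum_const, Finset.card_range]; ring
lemma numeric2 (ζ ε : ℝ) (m n x k a l : ℕ) (hζ0 : 0 < ζ) (hm : 2 ≤ m)
    (hε : 0 < ε) (hε6 : 6 * ε ≤ ζ / 4)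
    (hl : 2 * (m : ℝ) / ζ ≤ l)
    (h3 : 3 ≤ n) (hC : 4 * 4 ^ l * l.factorial ≤ n) (h4l : 4 * l ≤ n)
    (hx : (x : ℝ) ≤ (n : ℝ) ^ (1 - ζ)) (hk : (k : ℝ) ≤ (n : ℝ) ^ (6 * ε))
    (ha : ((n : ℝ) - 1) / 2 ≤ a) (hla : l ≤ a) :
    4 * n ^ m * x.choose l * k.choose l ≤ a.choose l := by
  have hN3 : (3 : ℝ) ≤ (n : ℝ) := by exact_mod_cast h3
  have hN0 : (0 : ℝ) < n := by linarith
  have hN1 : (1 : ℝ) ≤ n := by linarith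
  set N : ℝ := (n : ℝ) with hNdef
  -- key real inequality
  have key : (4 * n ^ m * x ^ l * k ^ l * l.factorial : ℝ) ≤ ((a + 1 - l : ℕ) : ℝ) ^ l := by
    have hcast : ((a + 1 - l : ℕ) : ℝ) = (a : ℝ) + 1 - l := by
      have : l ≤ a + 1 := by omega
      push_cast [this]; ring
    rw [hcast]
    have hlN : (l : ℝ) ≤ N / 4 := by
      have : (4 * l : ℝ) ≤ N := by rw [hNdef]; exact_mod_cast h4l
      linarith
    have hQ : N / 4 ≤ (a : ℝ) + 1 - l := by linarith
    have hxl : (x : ℝ) ^ l ≤ (N ^ (1 - ζ)) ^ l :=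
      pow_le_pow_left₀ (by positivity) hx l
    have hkl : (k : ℝ) ^ l ≤ (N ^ (6 * ε)) ^ l :=
      pow_le_pow_left₀ (by positivity) hk l
    have step1 : (4 * n ^ m * x ^ l * k ^ l * l.factorial : ℝ) ≤
        4 * N ^ m * (N ^ (1 - ζ)) ^ l * (N ^ (6 * ε)) ^ l * l.factorial := by
      have h1 : ((n : ℕ) : ℝ) ^ m = N ^ m := rfl
      push_cast
      have : (0 : ℝ) ≤ N ^ m := by positivity
      gcongr
    refine step1.trans ?_
    have e1 : (N ^ (1 - ζ)) ^ l = N ^ ((1 - ζ) * l) := by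
      rw [← Real.rpow_natCast (N ^ (1 - ζ)) l, ← Real.rpow_mul hN0.le]
    have e2 : (N ^ (6 * ε)) ^ l = N ^ ((6 * ε) * l) := by
      rw [← Real.rpow_natCast (N ^ (6 * ε)) l, ← Real.rpow_mul hN0.le]
    have e3 : ((N / 4) : ℝ) ^ l = N ^ ((l : ℝ)) / 4 ^ l := by
      rw [div_pow, Real.rpow_natCast]
    have hsplit : N ^ ((l : ℝ)) =
        N ^ ((1 - ζ) * l + (6 * ε) * l) * N ^ ((ζ - 6 * ε) * l) := by
      rw [← Real.rpow_add hN0]; ring_nf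
    have hmain : 4 * (4 : ℝ) ^ l * l.factorial * N ^ m ≤ N ^ ((ζ - 6 * ε) * l) := by
      have hexp : (m : ℝ) + 1 ≤ (ζ - 6 * ε) * l := by
        have hl0 : (2 * (m : ℝ)) / ζ ≤ l := hl
        have hlpos : (0 : ℝ) < l := lt_of_lt_of_le (by positivity) hl0
        have h34 : 3 * ζ / 4 ≤ ζ - 6 * ε := by linarith
        have : (3 * ζ / 4) * (2 * (m : ℝ) / ζ) ≤ (ζ - 6 * ε) * l := by
          apply mul_le_mul h34 hl0 (by positivity) (by linarith)
        have heq : (3 * ζ / 4) * (2 * (m : ℝ) / ζ) = 3 * (m : ℝ) / 2 := by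
          field_simp; ring
        rw [heq] at this
        have hm2 : (2 : ℝ) ≤ m := by exact_mod_cast hm
        linarith
      have h1 : N ^ ((m : ℝ) + 1) ≤ N ^ ((ζ - 6 * ε) * l) :=
        Real.rpow_le_rpow_of_exponent_le hN1 hexp
      have h2 : N ^ ((m : ℝ) + 1) = N * N ^ m := by
        rw [Real.rpow_add hN0, Real.rpow_one, Real.rpow_natCast]; ring
      have h3' : (4 * (4 : ℝ) ^ l * l.factorial) ≤ N := by
        rw [hNdef]; exact_mod_cast hC
      have h4 : 4 * (4 : ℝ) ^ l * l.factorial * N ^ m ≤ N * N ^ m := by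
        have : (0 : ℝ) ≤ N ^ m := by positivity
        gcongr
      calc 4 * (4 : ℝ) ^ l * l.factorial * N ^ m ≤ N * N ^ m := h4
        _ = N ^ ((m : ℝ) + 1) := h2.symm
        _ ≤ N ^ ((ζ - 6 * ε) * l) := h1
    calc 4 * N ^ m * (N ^ (1 - ζ)) ^ l * (N ^ (6 * ε)) ^ l * l.factorial
        = (4 * (4 : ℝ) ^ l * l.factorial * N ^ m) *
            (N ^ ((1 - ζ) * l) * N ^ ((6 * ε) * l)) / 4 ^ l := by
          rw [e1, e2]; field_simp
      _ ≤ N ^ ((ζ - 6 * ε) * l) * (N ^ ((1 - ζ) * l) * N ^ ((6 * ε) * l)) / 4 ^ l := by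
          gcongr
      _ = N ^ ((l : ℝ)) / 4 ^ l := by
          rw [hsplit, ← Real.rpow_add hN0]; ring_nf
      _ = ((N / 4) : ℝ) ^ l := e3.symm
      _ ≤ ((a : ℝ) + 1 - l) ^ l := pow_le_pow_left₀ (by positivity) hQ l
  -- back to ℕ
  have keyNat : 4 * n ^ m * x.choose l * k.choose l * l.factorial ≤ (a + 1 - l) ^ l := by
    have h1 : 4 * n ^ m * x.choose l * k.choose l * l.factorial ≤
        4 * n ^ m * x ^ l * k ^ l * l.factorial := by
      gcongr <;> exact Nat.choose_le_pow _ _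
    refine h1.trans ?_
    have : ((4 * n ^ m * x ^ l * k ^ l * l.factorial : ℕ) : ℝ) ≤ (((a + 1 - l) ^ l : ℕ) : ℝ) := by
      rw [Nat.cast_pow]
      push_cast
      exact key
    exact_mod_cast this
  have hdesc : (a + 1 - l) ^ l ≤ a.descFactorial l := Nat.pow_sub_le_descFactorial a l
  rw [Nat.descFactorial_eq_factorial_mul_choose] at hdesc
  have : 4 * n ^ m * x.choose l * k.choose l * l.factorial ≤ l.factorial * a.choose l :=
    keyNat.trans hdesc
  rw [mul_comm l.factorial (a.choose l)] at this
  exact Nat.le_of_mul_le_mul_right this l.factorial_pos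

set_option maxHeartbeats 1000000 in
lemma numeric1 (ε : ℝ) (n t d k a : ℕ) (hε : 0 < ε) (hε24 : ε ≤ 1 / 24)
    (h3 : 3 ≤ n) (h16 : 16 ≤ (n : ℝ) ^ (ε / 2)) (h8e : 8 / ε ≤ (n : ℝ) ^ (3 * ε))
    (h16b : 16 ≤ (n : ℝ) ^ (3 * ε))
    (ht_ge : (n : ℝ) ^ (3 * ε) ≤ t) (ht_le : (t : ℝ) ≤ (n : ℝ) ^ (3 * ε) + 1)
    (hd_ge : (n : ℝ) ^ (1 - 2 * ε) ≤ d)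
    (hk_ge : (n : ℝ) ^ (6 * ε) - 1 ≤ k)
    (ha : 2 * a ≤ n)
    (h4td : 4 * t ≤ d) (h4tk : 4 * t ≤ k) :
    4 * n * t * (2 * t * a) ^ t ≤ ((d - 2 * t) * (k - 2 * t)) ^ t := by
  have h2td : 2 * t ≤ d := by omega
  have h2tk : 2 * t ≤ k := by omega
  have hN3 : (3 : ℝ) ≤ (n : ℝ) := by exact_mod_cast h3
  have hN0 : (0 : ℝ) < (n : ℝ) := by linarith
  have hN1 : (1 : ℝ) ≤ (n : ℝ) := by linarith
  have hcast : ((4 * n * t * (2 * t * a) ^ t : ℕ) : ℝ) ≤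
      ((((d - 2 * t) * (k - 2 * t)) ^ t : ℕ) : ℝ) := by
    push_cast [Nat.cast_sub h2td, Nat.cast_sub h2tk]
    set N : ℝ := (n : ℝ) with hNdef
    set T : ℝ := (t : ℝ) with hTdef
    set D : ℝ := (d : ℝ) with hDdef
    set K : ℝ := (k : ℝ) with hKdef
    set Aa : ℝ := (a : ℝ) with hAdef
    have hT4 : 4 * T ≤ D := by rw [hTdef, hDdef]; exact_mod_cast h4td
    have hT4k : 4 * T ≤ K := by rw [hTdef, hKdef]; exact_mod_cast h4tk
    have hAa : 2 * Aa ≤ N := by rw [hAdef, hNdef]; exact_mod_cast ha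
    have hA0 : 0 ≤ Aa := by rw [hAdef]; positivity
    have hT0 : (0 : ℝ) ≤ T := by rw [hTdef]; positivity
    have hTle : T ≤ 2 * N ^ (3 * ε) := by linarith
    have h6e : N ^ (6 * ε) = N ^ (3 * ε) * N ^ (3 * ε) := by
      rw [← Real.rpow_add hN0]; ring_nf
    have h6e256 : 256 ≤ N ^ (6 * ε) := by
      rw [h6e]; nlinarith
    have hQ1 : N ^ (1 - 2 * ε) / 2 ≤ D - 2 * T := by linarith
    have hQ2 : N ^ (6 * ε) / 4 ≤ K - 2 * T := by linarith
    have hQ : N ^ (1 + 4 * ε) / 8 ≤ (D - 2 * T) * (K - 2 * T) := by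
      have he : N ^ (1 + 4 * ε) = N ^ (1 - 2 * ε) * N ^ (6 * ε) := by
        rw [← Real.rpow_add hN0]; ring_nf
      have h1 : (0 : ℝ) ≤ N ^ (1 - 2 * ε) / 2 := by positivity
      have h2 : (0 : ℝ) ≤ N ^ (6 * ε) / 4 := by positivity
      calc N ^ (1 + 4 * ε) / 8 = (N ^ (1 - 2 * ε) / 2) * (N ^ (6 * ε) / 4) := by
            rw [he]; ring
        _ ≤ (D - 2 * T) * (K - 2 * T) := mul_le_mul hQ1 hQ2 h2 (by linarith)
    have hP : 2 * T * Aa ≤ 2 * (N * N ^ (3 * ε)) := by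
      calc 2 * T * Aa ≤ 2 * (2 * N ^ (3 * ε)) * (N / 2) := by
            apply mul_le_mul (by nlinarith) (by linarith) hA0 (by positivity)
        _ = 2 * (N * N ^ (3 * ε)) := by ring
    have hP0 : (0 : ℝ) ≤ 2 * T * Aa := by positivity
    -- step 1 : 4 N T ≤ N^4
    have s1 : 4 * N * T ≤ N ^ (4 : ℝ) := by
      have hN3e : N ^ (3 * ε) ≤ N := by
        rw [show N = N ^ (1 : ℝ) by rw [Real.rpow_one]]
        rw [show (N ^ (1:ℝ)) ^ (3 * ε) = N ^ (3*ε) by rw [Real.rpow_one]]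
        exact Real.rpow_le_rpow_of_exponent_le hN1 (by linarith)
      have : N ^ (4 : ℝ) = N ^ (4 : ℕ) := by
        rw [← Real.rpow_natCast N 4]; norm_num
      rw [this]
      have hT2N : T ≤ 2 * N := by linarith
      have hN2 : 9 ≤ N ^ 2 := by nlinarith
      have e4 : N ^ (4 : ℕ) = N ^ 2 * N ^ 2 := by ring
      nlinarith [sq_nonneg N]
    have s2 : N ^ (4 : ℝ) ≤ N ^ ((ε / 2) * T) := by
      apply Real.rpow_le_rpow_of_exponent_le hN1
      have h8T : 8 / ε ≤ T := le_trans h8e ht_ge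
      have : 8 ≤ ε * T := by
        rw [div_le_iff₀ hε] at h8T; linarith
      nlinarith
    have s3 : N ^ ((ε / 2) * T) = (N ^ (ε / 2)) ^ t := by
      rw [← Real.rpow_natCast (N ^ (ε / 2)) t, ← Real.rpow_mul hN0.le, hTdef]
    have s4 : N ^ (ε / 2) ≤ N ^ ε / 16 := by
      have : N ^ ε = N ^ (ε / 2) * N ^ (ε / 2) := by
        rw [← Real.rpow_add hN0]; ring_nf
      rw [this]
      have h0 : (0 : ℝ) ≤ N ^ (ε / 2) := by positivity
      nlinarith
    have s5 : (N ^ ε / 16) * (2 * T * Aa) ≤ N ^ (1 + 4 * ε) / 8 := by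
      have he : N ^ (1 + 4 * ε) = N ^ ε * (N * N ^ (3 * ε)) := by
        rw [show (1 : ℝ) + 4 * ε = ε + (1 + 3 * ε) by ring, Real.rpow_add hN0,
          Real.rpow_add hN0, Real.rpow_one]
      have h0 : (0 : ℝ) ≤ N ^ ε / 16 := by positivity
      calc (N ^ ε / 16) * (2 * T * Aa) ≤ (N ^ ε / 16) * (2 * (N * N ^ (3 * ε))) :=
            mul_le_mul_of_nonneg_left hP h0
        _ = N ^ (1 + 4 * ε) / 8 := by rw [he]; ring
    calc 4 * N * T * (2 * T * Aa) ^ t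
        ≤ N ^ (4 : ℝ) * (2 * T * Aa) ^ t := by
          apply mul_le_mul_of_nonneg_right s1 (by positivity)
      _ ≤ (N ^ (ε / 2)) ^ t * (2 * T * Aa) ^ t := by
          rw [← s3]
          apply mul_le_mul_of_nonneg_right s2 (by positivity)
      _ ≤ (N ^ ε / 16) ^ t * (2 * T * Aa) ^ t := by
          apply mul_le_mul_of_nonneg_right _ (by positivity)
          exact pow_le_pow_left₀ (by positivity) s4 t
      _ = ((N ^ ε / 16) * (2 * T * Aa)) ^ t := by rw [← mul_pow]
      _ ≤ (N ^ (1 + 4 * ε) / 8) ^ t := pow_le_pow_left₀ (by positivity) s5 t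
      _ ≤ ((D - 2 * T) * (K - 2 * T)) ^ t := pow_le_pow_left₀ (by positivity) hQ t
  exact_mod_cast hcast
set_option maxHeartbeats 2000000 in
theorem stmt7 (ζ : ℝ) (hζ0 : 0 < ζ) (hζ1 : ζ < 1 / 2) (m : ℕ) (hm : 2 ≤ m) :
    ∃ ε₀ : ℝ, 0 < ε₀ ∧ ∀ ε : ℝ, 0 < ε → ε ≤ ε₀ →
      ∃ n₀ : ℕ, ∀ n : ℕ, n₀ ≤ n →
        ∀ (G' : SimpleGraph (Fin n)) (A B : Finset (Fin n)),
          Disjoint A B → A ∪ B = Finset.univ →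
          A.card = n / 2 → B.card = n - n / 2 →
          (∀ u v : Fin n, G'.Adj u v → (u ∈ A ∧ v ∈ B) ∨ (u ∈ B ∧ v ∈ A)) →
          (∀ v : Fin n, (n : ℝ) ^ (1 - 2 * ε) ≤ ((G'.neighborSet v).ncard : ℝ)) →
          ∃ M : Finset (Fin n), M ⊆ A ∧ M.card = ⌊(n : ℝ) ^ (6 * ε)⌋₊ ∧
            (∀ v ∈ B, (n : ℝ) ^ (3 * ε) ≤ (((G'.neighborSet v) ∩ ↑M).ncard : ℝ)) ∧
            ¬ ∃ S : Finset (Fin n), S ⊆ B ∧ S.card = m ∧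
                (((⋂ v ∈ S, G'.neighborSet v)).ncard : ℝ) ≤ (n : ℝ) ^ (1 - ζ) ∧
                (⌈2 * (m : ℝ) / ζ⌉₊ : ℝ) ≤ ((((⋂ v ∈ S, G'.neighborSet v) ∩ ↑M)).ncard : ℝ) := by
  classical
  set l : ℕ := ⌈2 * (m : ℝ) / ζ⌉₊ with hldef
  have hl_ge : 2 * (m : ℝ) / ζ ≤ l := Nat.le_ceil _
  refine ⟨min (ζ / 24) (1 / 24), by positivity, ?_⟩
  intro ε hε hεle
  have hε24 : ε ≤ 1 / 24 := hεle.trans (min_le_right _ _)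
  have hεζ : ε ≤ ζ / 24 := hεle.trans (min_le_left _ _)
  have hε6 : 6 * ε ≤ ζ / 4 := by linarith
  -- eventual conditions
  have hrpow : ∀ δ : ℝ, 0 < δ → ∀ C : ℝ, ∀ᶠ n : ℕ in Filter.atTop, C ≤ (n : ℝ) ^ δ := by
    intro δ hδ C
    exact ((tendsto_rpow_atTop hδ).comp
      tendsto_natCast_atTop_atTop).eventually_ge_atTop C
  have hev : ∀ᶠ n : ℕ in Filter.atTop,
      ((16 : ℝ) ≤ (n : ℝ) ^ (ε / 2) ∧ 8 / ε ≤ (n : ℝ) ^ (3 * ε) ∧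
        (16 : ℝ) ≤ (n : ℝ) ^ (3 * ε) ∧ (8 : ℝ) ≤ (n : ℝ) ^ (1 - 5 * ε)) ∧
      ((4 : ℝ) ≤ (n : ℝ) ^ ((3 : ℝ) / 4) ∧ ((l : ℝ) + 1) ≤ (n : ℝ) ^ (6 * ε)) ∧
      (4 * 4 ^ l * l.factorial ≤ n ∧ 3 ≤ n ∧ 4 * l ≤ n) := by
    filter_upwards [hrpow (ε / 2) (by positivity) 16, hrpow (3 * ε) (by positivity) (8 / ε),
      hrpow (3 * ε) (by positivity) 16, hrpow (1 - 5 * ε) (by linarith) 8,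
      hrpow ((3 : ℝ) / 4) (by norm_num) 4, hrpow (6 * ε) (by positivity) ((l : ℝ) + 1),
      Filter.eventually_ge_atTop (4 * 4 ^ l * l.factorial), Filter.eventually_ge_atTop 3,
      Filter.eventually_ge_atTop (4 * l)] with n h1 h2 h3 h4 h5 h6 h7 h8 h9
    exact ⟨⟨h1, h2, h3, h4⟩, ⟨h5, h6⟩, h7, h8, h9⟩
  obtain ⟨n₀, hn₀⟩ := Filter.eventually_atTop.mp hev
  refine ⟨n₀, ?_⟩
  intro n hn G' A B hdisj huniv hAcard hBcard hbip hdeg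
  obtain ⟨⟨h16, h8e, h16b, h8⟩, ⟨h434, hl1⟩, hCn, h3n, h4l⟩ := hn₀ n hn
  have hN3 : (3 : ℝ) ≤ (n : ℝ) := by exact_mod_cast h3n
  have hN0 : (0 : ℝ) < (n : ℝ) := by linarith
  have hN1 : (1 : ℝ) ≤ (n : ℝ) := by linarith
  set k : ℕ := ⌊(n : ℝ) ^ (6 * ε)⌋₊ with hkdef
  set t : ℕ := ⌈(n : ℝ) ^ (3 * ε)⌉₊ with htdef
  set d : ℕ := ⌈(n : ℝ) ^ (1 - 2 * ε)⌉₊ with hddef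
  set x : ℕ := ⌊(n : ℝ) ^ (1 - ζ)⌋₊ with hxdef
  have hk_le : (k : ℝ) ≤ (n : ℝ) ^ (6 * ε) := Nat.floor_le (by positivity)
  have hk_ge : (n : ℝ) ^ (6 * ε) - 1 ≤ k := by
    have := Nat.lt_floor_add_one ((n : ℝ) ^ (6 * ε)); push_cast at this ⊢; linarith
  have ht_ge : (n : ℝ) ^ (3 * ε) ≤ t := Nat.le_ceil _
  have ht_le : (t : ℝ) ≤ (n : ℝ) ^ (3 * ε) + 1 := by
    have := Nat.ceil_lt_add_one (show (0:ℝ) ≤ (n : ℝ) ^ (3 * ε) by positivity)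
    linarith
  have hd_ge : (n : ℝ) ^ (1 - 2 * ε) ≤ d := Nat.le_ceil _
  have hx_le : (x : ℝ) ≤ (n : ℝ) ^ (1 - ζ) := Nat.floor_le (by positivity)
  -- basic ℕ facts
  have ht1 : 1 ≤ t := by
    have : (1 : ℝ) ≤ (t : ℝ) := by linarith
    exact_mod_cast this
  have hsplit15 : (n : ℝ) ^ (1 - 2 * ε) = (n : ℝ) ^ (1 - 5 * ε) * (n : ℝ) ^ (3 * ε) := by
    rw [← Real.rpow_add hN0]; ring_nf
  have h4td : 4 * t ≤ d := by
    have : (4 * t : ℝ) ≤ (d : ℝ) := by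
      have h1 : (4 * t : ℝ) ≤ 8 * (n : ℝ) ^ (3 * ε) := by linarith
      have h2 : 8 * (n : ℝ) ^ (3 * ε) ≤ (n : ℝ) ^ (1 - 2 * ε) := by
        rw [hsplit15]
        have : (0:ℝ) ≤ (n : ℝ) ^ (3 * ε) := by positivity
        nlinarith
      linarith
    exact_mod_cast this
  have h4tk : 4 * t ≤ k := by
    have hy : (16 : ℝ) ≤ (n : ℝ) ^ (3 * ε) := h16b
    have h6e : (n : ℝ) ^ (6 * ε) = (n : ℝ) ^ (3 * ε) * (n : ℝ) ^ (3 * ε) := by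
      rw [← Real.rpow_add hN0]; ring_nf
    have : (4 * t : ℝ) ≤ (k : ℝ) := by
      have h1 : (4 * t : ℝ) ≤ 8 * (n : ℝ) ^ (3 * ε) := by linarith
      nlinarith
    exact_mod_cast this
  have h2td : 2 * t ≤ d := by omega
  have h2tk : 2 * t ≤ k := by omega
  have haN : 2 * A.card ≤ n := by omega
  have haN2 : n ≤ 2 * A.card + 1 := by omega
  have haR : ((n : ℝ) - 1) / 2 ≤ (A.card : ℝ) := by
    have : (n : ℝ) ≤ 2 * (A.card : ℝ) + 1 := by exact_mod_cast haN2
    linarith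
  have hka : k ≤ A.card := by
    have h1 : (k : ℝ) ≤ (n : ℝ) ^ ((1 : ℝ) / 4) := by
      refine hk_le.trans (Real.rpow_le_rpow_of_exponent_le hN1 (by linarith))
    have h2 : (n : ℝ) ^ ((1 : ℝ) / 4) * 4 ≤ (n : ℝ) := by
      have e : (n : ℝ) ^ ((1 : ℝ) / 4) * (n : ℝ) ^ ((3 : ℝ) / 4) = (n : ℝ) := by
        rw [← Real.rpow_add hN0]; norm_num
      calc (n : ℝ) ^ ((1 : ℝ) / 4) * 4 ≤ (n : ℝ) ^ ((1 : ℝ) / 4) * (n : ℝ) ^ ((3 : ℝ) / 4) := by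
            apply mul_le_mul_of_nonneg_left h434 (by positivity)
        _ = (n : ℝ) := e
    have : (k : ℝ) ≤ (A.card : ℝ) := by linarith
    exact_mod_cast this
  have hlk : l ≤ k := by
    have hk1 : (n : ℝ) ^ (6 * ε) < (k : ℝ) + 1 := Nat.lt_floor_add_one _
    have : (l : ℝ) < (k : ℝ) + 1 - 1 + 1 := by linarith
    have : (l : ℝ) < (k : ℝ) + 1 := by linarith
    have h2 : l < k + 1 := by exact_mod_cast this
    omega
  have hla : l ≤ A.card := hlk.trans hka
  -- graph facts
  have hNBsub : ∀ v ∈ B, G'.neighborFinset v ⊆ A := by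
    intro v hv u hu
    rw [SimpleGraph.mem_neighborFinset] at hu
    rcases hbip v u hu with ⟨hvA, _⟩ | ⟨_, huA⟩
    · exact absurd hvA (Finset.disjoint_right.mp hdisj hv)
    · exact huA
  have hNcard : ∀ v : Fin n, d ≤ (G'.neighborFinset v).card := by
    intro v
    apply Nat.ceil_le.mpr
    have he : ((G'.neighborFinset v).card : ℝ) = ((G'.neighborSet v).ncard : ℝ) := by
      congr 1
      rw [Set.ncard_eq_toFinset_card']
      rfl
    rw [he]
    exact hdeg v
  -- the bad families
  set XF : Finset (Fin n) → Finset (Fin n) :=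
    fun S => A.filter (fun u => ∀ v ∈ S, G'.Adj v u) with hXFdef
  set P1 : Fin n → Finset (Finset (Fin n)) :=
    fun v => (A.powersetCard k).filter
      (fun M => (M ∩ G'.neighborFinset v).card < t) with hP1def
  set SS : Finset (Finset (Fin n)) :=
    (B.powersetCard m).filter (fun S => (XF S).card ≤ x) with hSSdef
  set P2 : Finset (Fin n) → Finset (Finset (Fin n)) :=
    fun S => (A.powersetCard k).filter (fun M => l ≤ (M ∩ XF S).card) with hP2def
  set Bad : Finset (Finset (Fin n)) := B.biUnion P1 ∪ SS.biUnion P2 with hBaddef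
  have hP1card : ∀ v ∈ B, 4 * n * (P1 v).card ≤ A.card.choose k := by
    intro v hv
    obtain ⟨D, hDsub, hDcard⟩ := Finset.exists_subset_card_eq (hNcard v)
    have hDA : D ⊆ A := hDsub.trans (hNBsub v hv)
    have hsub : P1 v ⊆ (A.powersetCard k).filter (fun M => (M ∩ D).card < t) := by
      intro M hM
      rw [hP1def] at hM
      simp only [Finset.mem_filter] at hM ⊢
      refine ⟨hM.1, lt_of_le_of_lt ?_ hM.2⟩
      exact Finset.card_le_card (Finset.inter_subset_inter Finset.Subset.rfl hDsub)
    have hb := aux_bad1 A D hDA k t (by rw [hDcard]; exact h4td) h4tk ht1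
    rw [hDcard] at hb
    have hF := Finset.card_le_card hsub
    have hnum := numeric1 ε n t d k A.card hε hε24 h3n h16 h8e h16b ht_ge ht_le hd_ge
      hk_ge haN h4td h4tk
    have hQpos : 0 < ((d - 2 * t) * (k - 2 * t)) ^ t := by
      have hd1 : 1 ≤ d - 2 * t := by omega
      have hk1 : 1 ≤ k - 2 * t := by omega
      positivity
    apply Nat.le_of_mul_le_mul_right _ hQpos
    calc 4 * n * (P1 v).card * ((d - 2 * t) * (k - 2 * t)) ^ t
        ≤ 4 * n * (((A.powersetCard k).filter
            (fun M => (M ∩ D).card < t)).card * ((d - 2 * t) * (k - 2 * t)) ^ t) := by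
          rw [← Nat.mul_assoc]
          exact Nat.mul_le_mul_right _ (Nat.mul_le_mul_left _ hF)
      _ ≤ 4 * n * (t * (2 * t * A.card) ^ t * A.card.choose k) :=
          Nat.mul_le_mul_left _ hb
      _ = 4 * n * t * (2 * t * A.card) ^ t * A.card.choose k := by ring
      _ ≤ ((d - 2 * t) * (k - 2 * t)) ^ t * A.card.choose k :=
          Nat.mul_le_mul_right _ hnum
      _ = A.card.choose k * ((d - 2 * t) * (k - 2 * t)) ^ t := by ring
  have hP2card : ∀ S ∈ SS, (P2 S).card ≤ x.choose l * (A.card - l).choose (k - l) := by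
    intro S hS
    have hXA : XF S ⊆ A := by rw [hXFdef]; exact Finset.filter_subset _ _
    have hcover : P2 S ⊆ ((XF S).powersetCard l).biUnion
        (fun T => (A.powersetCard k).filter (fun M => T ⊆ M)) := by
      intro M hM
      rw [hP2def] at hM
      simp only [Finset.mem_filter] at hM
      obtain ⟨T, hT, hTcard⟩ := Finset.exists_subset_card_eq hM.2
      refine Finset.mem_biUnion.mpr ⟨T, ?_, ?_⟩
      · exact Finset.mem_powersetCard.mpr ⟨hT.trans Finset.inter_subset_right, hTcard⟩
      · exact Finset.mem_filter.mpr ⟨hM.1, hT.trans Finset.inter_subset_left⟩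
    refine (Finset.card_le_card hcover).trans (Finset.card_biUnion_le.trans ?_)
    have hbound : ∀ T ∈ (XF S).powersetCard l,
        ((A.powersetCard k).filter (fun M => T ⊆ M)).card ≤
          (A.card - l).choose (k - l) := by
      intro T hT
      obtain ⟨hTX, hTcard⟩ := Finset.mem_powersetCard.mp hT
      have := aux_count2 A T (hTX.trans hXA) k
      rwa [hTcard] at this
    calc ∑ T ∈ (XF S).powersetCard l,
          ((A.powersetCard k).filter (fun M => T ⊆ M)).card
        ≤ ∑ T ∈ (XF S).powersetCard l, (A.card - l).choose (k - l) :=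
          Finset.sum_le_sum hbound
      _ = ((XF S).powersetCard l).card * (A.card - l).choose (k - l) := by
          rw [Finset.sum_const, smul_eq_mul]
      _ ≤ x.choose l * (A.card - l).choose (k - l) := by
          apply Nat.mul_le_mul_right
          rw [Finset.card_powersetCard]
          have hSx : (XF S).card ≤ x := (Finset.mem_filter.mp hS).2
          exact Nat.choose_le_choose l hSx
  -- total bad count
  have hBn : B.card ≤ n := by
    have := Finset.card_le_univ B
    simpa using this
  have hS1 : 4 * (∑ v ∈ B, (P1 v).card) ≤ A.card.choose k := by
    have h1 : n * (4 * ∑ v ∈ B, (P1 v).card) ≤ n * A.card.choose k := by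
      calc n * (4 * ∑ v ∈ B, (P1 v).card) = ∑ v ∈ B, 4 * n * (P1 v).card := by
            rw [Finset.mul_sum, Finset.mul_sum]
            apply Finset.sum_congr rfl; intro v _; ring
        _ ≤ ∑ v ∈ B, A.card.choose k := Finset.sum_le_sum hP1card
        _ = B.card * A.card.choose k := by rw [Finset.sum_const, smul_eq_mul]
        _ ≤ n * A.card.choose k := Nat.mul_le_mul_right _ hBn
    exact Nat.le_of_mul_le_mul_left h1 (by omega)
  have hnum2 := numeric2 ζ ε m n x k A.card l hζ0 hm hε hε6 hl_ge h3n hCn h4l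
    hx_le hk_le haR hla
  have hkey2 : 4 * n ^ m * (x.choose l * (A.card - l).choose (k - l)) ≤ A.card.choose k := by
    have hid := Nat.choose_mul (n := A.card) hlk
    have h := Nat.mul_le_mul_right ((A.card - l).choose (k - l)) hnum2
    rw [← hid] at h
    have hklpos : 0 < k.choose l := Nat.choose_pos hlk
    apply Nat.le_of_mul_le_mul_right _ hklpos
    calc 4 * n ^ m * (x.choose l * (A.card - l).choose (k - l)) * k.choose l
        = 4 * n ^ m * x.choose l * k.choose l * (A.card - l).choose (k - l) := by ring
      _ ≤ A.card.choose k * k.choose l := h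
  have hSScard : SS.card ≤ n ^ m := by
    calc SS.card ≤ (B.powersetCard m).card :=
          Finset.card_le_card (Finset.filter_subset _ _)
      _ = B.card.choose m := Finset.card_powersetCard _ _
      _ ≤ n.choose m := Nat.choose_le_choose m hBn
      _ ≤ n ^ m := Nat.choose_le_pow n m
  have hS2 : 4 * (∑ S ∈ SS, (P2 S).card) ≤ A.card.choose k := by
    calc 4 * (∑ S ∈ SS, (P2 S).card)
        ≤ 4 * (∑ S ∈ SS, x.choose l * (A.card - l).choose (k - l)) :=
          Nat.mul_le_mul_left _ (Finset.sum_le_sum hP2card)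
      _ = 4 * (SS.card * (x.choose l * (A.card - l).choose (k - l))) := by
          rw [Finset.sum_const, smul_eq_mul]
      _ ≤ 4 * (n ^ m * (x.choose l * (A.card - l).choose (k - l))) :=
          Nat.mul_le_mul_left _ (Nat.mul_le_mul_right _ hSScard)
      _ = 4 * n ^ m * (x.choose l * (A.card - l).choose (k - l)) := by ring
      _ ≤ A.card.choose k := hkey2
  have hCpos : 0 < A.card.choose k := Nat.choose_pos hka
  have hBadlt : Bad.card < (A.powersetCard k).card := by
    rw [Finset.card_powersetCard]
    have h1 : Bad.card ≤ (∑ v ∈ B, (P1 v).card) + (∑ S ∈ SS, (P2 S).card) := by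
      rw [hBaddef]
      exact (Finset.card_union_le _ _).trans
        (Nat.add_le_add Finset.card_biUnion_le Finset.card_biUnion_le)
    omega
  have hex : ∃ M ∈ A.powersetCard k, M ∉ Bad := by
    by_contra hcon
    push_neg at hcon
    exact absurd (Finset.card_le_card hcon) (not_le.mpr hBadlt)
  obtain ⟨M, hM𝒫, hMBad⟩ := hex
  obtain ⟨hMA, hMk⟩ := Finset.mem_powersetCard.mp hM𝒫
  refine ⟨M, hMA, hMk, ?_, ?_⟩
  · -- condition (a)
    intro v hv
    have hM1 : M ∉ P1 v := by
      intro h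
      exact hMBad (Finset.mem_union_left _ (Finset.mem_biUnion.mpr ⟨v, hv, h⟩))
    have hnotlt : ¬ (M ∩ G'.neighborFinset v).card < t := by
      intro h
      exact hM1 (by rw [hP1def]; exact Finset.mem_filter.mpr ⟨hM𝒫, h⟩)
    push_neg at hnotlt
    have hset : G'.neighborSet v ∩ ↑M = ↑(M ∩ G'.neighborFinset v) := by
      ext u
      simp only [Set.mem_inter_iff, SimpleGraph.mem_neighborSet, Finset.coe_inter,
        Finset.mem_coe, SimpleGraph.mem_neighborFinset]
      tauto
    rw [hset, Set.ncard_coe_finset]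
    calc (n : ℝ) ^ (3 * ε) ≤ (t : ℝ) := ht_ge
      _ ≤ ((M ∩ G'.neighborFinset v).card : ℝ) := by exact_mod_cast hnotlt
  · -- condition (b)
    rintro ⟨S, hSB, hSm, hsmall, hbig⟩
    have hXsub : ↑(XF S) ⊆ ⋂ v ∈ S, G'.neighborSet v := by
      intro u hu
      rw [hXFdef] at hu
      simp only [Finset.coe_filter, Set.mem_setOf_eq] at hu
      rw [Set.mem_iInter₂]
      intro v hv
      exact hu.2 v hv
    have hXcard : (XF S).card ≤ x := by
      apply Nat.le_floor
      have h1 : ((XF S).card : ℝ) ≤ ((⋂ v ∈ S, G'.neighborSet v).ncard : ℝ) := by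
        rw [← Set.ncard_coe_finset]
        exact_mod_cast Nat.cast_le.mpr (Set.ncard_le_ncard hXsub (Set.toFinite _))
      exact h1.trans hsmall
    have hSmem : S ∈ SS := by
      rw [hSSdef]
      exact Finset.mem_filter.mpr ⟨Finset.mem_powersetCard.mpr ⟨hSB, hSm⟩, hXcard⟩
    have hXM : (⋂ v ∈ S, G'.neighborSet v) ∩ ↑M = ↑(M ∩ XF S) := by
      ext u
      simp only [Set.mem_inter_iff, Set.mem_iInter, SimpleGraph.mem_neighborSet,
        Finset.coe_inter, Finset.mem_coe, hXFdef, Finset.mem_filter]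
      constructor
      · rintro ⟨h1, h2⟩
        exact ⟨h2, hMA h2, fun v hv => h1 v hv⟩
      · rintro ⟨h1, _, h3⟩
        exact ⟨h3, h1⟩
    have hbig' : l ≤ (M ∩ XF S).card := by
      rw [hXM, Set.ncard_coe_finset] at hbig
      exact_mod_cast hbig
    exact hMBad (Finset.mem_union_right _ (Finset.mem_biUnion.mpr
      ⟨S, hSmem, by rw [hP2def]; exact Finset.mem_filter.mpr ⟨hM𝒫, hbig'⟩⟩))
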